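/- Derivative of the reduced one-dimensional Version 1 cost: define C₀⁽¹⁾(x) := N·[G(x) − G(ā(x)·x)] + G(X₀ − N(1 − ā(x))x) − G(0). Then for all x ∈ ℝ, d/dx C₀⁽¹⁾(x) = N·(1 − ā(x)(1 − τρ̄′(x)x))·ĥ₁(x), where ĥ₁(x) := h₁(x) − F⁻¹(X₀ − Nx(1 − ā(x))). -/

import Mathlib

open Real Filter

/-- `Fi f x = F(x) = ∫₀ˣ f(y) dy`. -/
noncomputable def Fi (f : ℝ → ℝ) (x : ℝ) : ℝ := ∫ y in (0:ℝ)..x, f y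

/-- `Ft f x = F̃(x) = ∫₀ˣ y f(y) dy`. -/
noncomputable def Ft (f : ℝ → ℝ) (x : ℝ) : ℝ := ∫ y in (0:ℝ)..x, y * f y

/-- `Gf f Finv = G = F̃ ∘ F⁻¹`. -/
noncomputable def Gf (f Finv : ℝ → ℝ) (x : ℝ) : ℝ := Ft f (Finv x)

/-- `ab τ ρ x = ā(x) = exp(−τ ρ̄(x))`. -/
noncomputable def ab (τ : ℝ) (ρ : ℝ → ℝ) (x : ℝ) : ℝ := Real.exp (-(τ * ρ x))

/-- The function `h₁` of the generalized AFS model, Version 1. -/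
noncomputable def h1 (Finv : ℝ → ℝ) (τ : ℝ) (ρ : ℝ → ℝ) (x : ℝ) : ℝ :=
  (Finv x - ab τ ρ x * (1 - τ * deriv ρ x * x) * Finv (ab τ ρ x * x)) /
    (1 - ab τ ρ x * (1 - τ * deriv ρ x * x))

/-- `ĥ₁(x) = h₁(x) − F⁻¹(X₀ − Nx(1 − ā(x)))`. -/
noncomputable def h1hat (Finv : ℝ → ℝ) (τ : ℝ) (ρ : ℝ → ℝ) (N : ℕ) (X₀ : ℝ) (x : ℝ) : ℝ :=
  h1 Finv τ ρ x - Finv (X₀ - (N : ℝ) * (x * (1 - ab τ ρ x)))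

/-- The reduced one-dimensional Version 1 cost
`C₀⁽¹⁾(x) = N[G(x) − G(ā(x)x)] + G(X₀ − N(1 − ā(x))x) − G(0)`. -/
noncomputable def C10 (f Finv : ℝ → ℝ) (τ : ℝ) (ρ : ℝ → ℝ) (N : ℕ) (X₀ : ℝ) (x : ℝ) : ℝ :=
  (N : ℝ) * (Gf f Finv x - Gf f Finv (ab τ ρ x * x)) +
    Gf f Finv (X₀ - (N : ℝ) * ((1 - ab τ ρ x) * x)) - Gf f Finv 0

lemma Fi_hasDerivAt (f : ℝ → ℝ) (hf : Continuous f) (x : ℝ) : HasDerivAt (Fi f) (f x) x :=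
  (intervalIntegral.integral_hasStrictDerivAt_right (hf.intervalIntegrable 0 x)
    (hf.stronglyMeasurableAtFilter _ _) hf.continuousAt).hasDerivAt

lemma Ft_hasDerivAt (f : ℝ → ℝ) (hf : Continuous f) (x : ℝ) :
    HasDerivAt (Ft f) (x * f x) x :=
  (intervalIntegral.integral_hasStrictDerivAt_right ((continuous_id.mul hf).intervalIntegrable 0 x)
    ((continuous_id.mul hf).stronglyMeasurableAtFilter _ _)
    (continuous_id.mul hf).continuousAt).hasDerivAt

lemma Finv_hasDerivAt (f Finv : ℝ → ℝ) (hf : Continuous f) (hfpos : ∀ x, 0 < f x)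
    (hFinv₁ : ∀ x, Fi f (Finv x) = x) (hFinv₂ : ∀ x, Finv (Fi f x) = x) (x : ℝ) :
    HasDerivAt Finv (f (Finv x))⁻¹ x := by
  have hmono : StrictMono (Fi f) := strictMono_of_deriv_pos fun y => by
    rw [(Fi_hasDerivAt f hf y).deriv]; exact hfpos y
  have hFsurj : Function.Surjective Finv := fun y => ⟨Fi f y, hFinv₂ y⟩
  have hFmono : StrictMono Finv := fun a b hab => by
    have := hmono.lt_iff_lt (a := Finv a) (b := Finv b)
    rw [hFinv₁, hFinv₁] at this
    exact this.mp hab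
  have hcont : Continuous Finv := by
    have := (StrictMono.orderIsoOfSurjective Finv hFmono hFsurj).continuous
    rwa [StrictMono.coe_orderIsoOfSurjective] at this
  exact HasDerivAt.of_local_left_inverse hcont.continuousAt
    (Fi_hasDerivAt f hf (Finv x)) (ne_of_gt (hfpos _))
    (Eventually.of_forall hFinv₁)

lemma Gf_hasDerivAt (f Finv : ℝ → ℝ) (hf : Continuous f) (hfpos : ∀ x, 0 < f x)
    (hFinv₁ : ∀ x, Fi f (Finv x) = x) (hFinv₂ : ∀ x, Finv (Fi f x) = x) (x : ℝ) :
    HasDerivAt (Gf f Finv) (Finv x) x := by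
  have h := (Ft_hasDerivAt f hf (Finv x)).comp x
    (Finv_hasDerivAt f Finv hf hfpos hFinv₁ hFinv₂ x)
  have hne : f (Finv x) ≠ 0 := ne_of_gt (hfpos _)
  have : Finv x * f (Finv x) * (f (Finv x))⁻¹ = Finv x := by
    field_simp
  rw [this] at h
  exact h

lemma ab_hasDerivAt (τ : ℝ) (ρ : ℝ → ℝ) (hρ : ContDiff ℝ 1 ρ) (x : ℝ) :
    HasDerivAt (fun y => ab τ ρ y) (-(τ * deriv ρ x) * ab τ ρ x) x := by
  have hρd : HasDerivAt ρ (deriv ρ x) x := (hρ.differentiable one_ne_zero x).hasDerivAt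
  have := ((hρd.const_mul τ).neg).exp
  simpa [ab, mul_comm] using this

/-- Derivative of the reduced Version 1 cost:
`(C₀⁽¹⁾)′(x) = N(1 − ā(x)(1 − τρ̄′(x)x))·ĥ₁(x)`. -/
theorem C10_deriv
    (f Finv : ℝ → ℝ) (hf : Continuous f) (hfpos : ∀ x, 0 < f x)
    (htop : Tendsto (Fi f) atTop atTop) (hbot : Tendsto (Fi f) atBot atBot)
    (hFinv₁ : ∀ x, Fi f (Finv x) = x) (hFinv₂ : ∀ x, Finv (Fi f x) = x)
    (τ : ℝ) (hτ : 0 < τ) (ρ : ℝ → ℝ) (hρ : ContDiff ℝ 1 ρ)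
    (hwd : ∀ x, ab τ ρ x * (1 - τ * deriv ρ x * x) ≠ 1)
    (N : ℕ) (hN : 1 ≤ N) (X₀ : ℝ) (hX₀ : 0 < X₀) :
    ∀ x : ℝ, deriv (C10 f Finv τ ρ N X₀) x =
      (N : ℝ) * (1 - ab τ ρ x * (1 - τ * deriv ρ x * x)) * h1hat Finv τ ρ N X₀ x := by
  intro x
  set a := ab τ ρ x with ha
  set r := deriv ρ x with hr
  have hG : ∀ y, HasDerivAt (Gf f Finv) (Finv y) y :=
    Gf_hasDerivAt f Finv hf hfpos hFinv₁ hFinv₂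
  have hab := ab_hasDerivAt τ ρ hρ x
  -- derivative of y ↦ ab y * y
  have hu₂ : HasDerivAt (fun y => ab τ ρ y * y) (a * (1 - τ * r * x)) x := by
    have := hab.mul (hasDerivAt_id x)
    refine this.congr_deriv ?_
    simp only [id_eq, mul_one]
    ring
  -- derivative of y ↦ X₀ - N * ((1 - ab y) * y)
  have hu₃ : HasDerivAt (fun y => X₀ - (N : ℝ) * ((1 - ab τ ρ y) * y))
      (-((N : ℝ) * (1 - a * (1 - τ * r * x)))) x := by
    have h1' : HasDerivAt (fun y => (1 - ab τ ρ y) * y)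
        (1 - a * (1 - τ * r * x)) x := by
      have := ((hasDerivAt_const x (1:ℝ)).sub hab).mul (hasDerivAt_id x)
      refine this.congr_deriv ?_
      simp only [id_eq, mul_one, Pi.sub_apply]
      ring
    have := (hasDerivAt_const x X₀).sub (h1'.const_mul (N : ℝ))
    refine this.congr_deriv ?_
    ring
  have hC : HasDerivAt (C10 f Finv τ ρ N X₀)
      ((N : ℝ) * (Finv x - Finv (a * x) * (a * (1 - τ * r * x))) +
        Finv (X₀ - (N : ℝ) * ((1 - a) * x)) * (-((N : ℝ) * (1 - a * (1 - τ * r * x))))) x := by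
    have hG1 : HasDerivAt (fun y => Gf f Finv y) (Finv x) x := hG x
    have hG2' := HasDerivAt.comp (h₂ := Gf f Finv) (h := fun y => ab τ ρ y * y) x
      (hG (a * x)) hu₂
    have hG2 : HasDerivAt (fun y => Gf f Finv (ab τ ρ y * y))
        (Finv (a * x) * (a * (1 - τ * r * x))) x := by
      exact hG2'
    have hG3' := HasDerivAt.comp (h₂ := Gf f Finv)
      (h := fun y => X₀ - (N : ℝ) * ((1 - ab τ ρ y) * y)) x
      (hG (X₀ - (N : ℝ) * ((1 - a) * x))) hu₃
    have hG3 : HasDerivAt (fun y => Gf f Finv (X₀ - (N : ℝ) * ((1 - ab τ ρ y) * y)))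
        (Finv (X₀ - (N : ℝ) * ((1 - a) * x)) * (-((N : ℝ) * (1 - a * (1 - τ * r * x))))) x := by
      exact hG3'
    have key := (((hG1.sub hG2).const_mul (N : ℝ)).add hG3).sub (hasDerivAt_const x (Gf f Finv 0))
    rw [sub_zero] at key
    exact key
  rw [hC.deriv]
  have hA : 1 - a * (1 - τ * r * x) ≠ 0 := sub_ne_zero_of_ne (Ne.symm (hwd x))
  have harg : X₀ - (N : ℝ) * (x * (1 - a)) = X₀ - (N : ℝ) * ((1 - a) * x) := by ring
  simp only [h1hat, h1, ← ha, ← hr, harg]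
  rw [mul_sub ((N : ℝ) * _) (_ / _), mul_assoc (N : ℝ) _ (_ / _), mul_div_cancel₀ _ hA]
  ring
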